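/- There exists a constant c > 0 such that for all real numbers a, b with 0 ≤ a ≤ b, one has Λ(a) + Λ(b) − Λ(a+b) ≥ c · a^{1/2} · (min(a,1))^{1/2} · (min(b,1))², where Λ(ξ) = ξ·√(tanh ξ / ξ) (with Λ(0)=0). -/

import Mathlib

open Real Set

set_option maxHeartbeats 4000000

/-- The Whitham dispersion relation, `Λ ξ = ξ * √(tanh ξ / ξ)` (with `Λ 0 = 0`). -/
noncomputable def Lam (ξ : ℝ) : ℝ := ξ * Real.sqrt (Real.tanh ξ / ξ)


lemma tanh_hasDerivAt (x : ℝ) : HasDerivAt Real.tanh (1 - Real.tanh x ^ 2) x := by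
  have hc := Real.cosh_pos x
  have h : HasDerivAt (fun y => Real.sinh y / Real.cosh y)
      ((Real.cosh x * Real.cosh x - Real.sinh x * Real.sinh x) / Real.cosh x ^ 2) x :=
    (Real.hasDerivAt_sinh x).div (Real.hasDerivAt_cosh x) (ne_of_gt hc)
  have he : Real.tanh = fun y => Real.sinh y / Real.cosh y :=
    funext fun y => Real.tanh_eq_sinh_div_cosh y
  rw [he]
  convert h using 1
  have hid : Real.cosh x ^ 2 - Real.sinh x ^ 2 = 1 := Real.cosh_sq_sub_sinh_sq x
  simp only
  field_simp

lemma tanh_nonneg {x : ℝ} (hx : 0 ≤ x) : 0 ≤ Real.tanh x := by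
  rw [Real.tanh_eq_sinh_div_cosh]
  exact div_nonneg (Real.sinh_nonneg_iff.2 hx) (Real.cosh_pos x).le

lemma tanh_le_one (x : ℝ) : Real.tanh x ≤ 1 := by
  rw [Real.tanh_eq_sinh_div_cosh]
  rw [div_le_one (Real.cosh_pos x)]
  nlinarith [Real.cosh_sub_sinh x, Real.exp_pos (-x)]

lemma mono_aux {f f' : ℝ → ℝ} (hf : ∀ x, HasDerivAt f (f' x) x)
    (h0 : ∀ x, 0 ≤ x → 0 ≤ f' x) : MonotoneOn f (Ici (0:ℝ)) := by
  apply monotoneOn_of_deriv_nonneg (convex_Ici 0)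
  · exact (fun x _ => (hf x).differentiableAt.continuousAt.continuousWithinAt)
  · exact fun x _ => (hf x).differentiableAt.differentiableWithinAt
  · intro x hx
    rw [interior_Ici] at hx
    rw [(hf x).deriv]
    exact h0 x (le_of_lt hx)

-- L1
lemma tanh_le_self {x : ℝ} (hx : 0 ≤ x) : Real.tanh x ≤ x := by
  have h := mono_aux (f := fun y => y - Real.tanh y) (f' := fun y => Real.tanh y ^ 2)
    (fun y => by
      have := (hasDerivAt_id y).sub (tanh_hasDerivAt y)
      refine this.congr_deriv ?_; ring)
    (fun y _ => sq_nonneg _)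
  have := h (self_mem_Ici) hx hx
  simp [Real.tanh_zero] at this
  linarith

-- L2
lemma tanh_ge_cubic {x : ℝ} (hx : 0 ≤ x) : x - x^3/3 ≤ Real.tanh x := by
  have h := mono_aux (f := fun y => Real.tanh y - y + y^3/3) (f' := fun y => y^2 - Real.tanh y ^ 2)
    (fun y => by
      have := ((tanh_hasDerivAt y).sub (hasDerivAt_id y)).add
        (((hasDerivAt_pow 3 y)).div_const 3)
      refine this.congr_deriv ?_; push_cast; ring)
    (fun y hy => by nlinarith [tanh_le_self hy, tanh_nonneg hy])
  have := h (self_mem_Ici) hx hx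
  simp [Real.tanh_zero] at this
  linarith

-- L3
lemma tanh_le_quintic {x : ℝ} (hx : 0 ≤ x) : Real.tanh x ≤ x - x^3/3 + (2/15)*x^5 := by
  have h := mono_aux (f := fun y => y - y^3/3 + (2/15)*y^5 - Real.tanh y)
    (f' := fun y => Real.tanh y ^ 2 - y^2 + (2/3)*y^4)
    (fun y => by
      have := (((hasDerivAt_id y).sub ((hasDerivAt_pow 3 y).div_const 3)).add
        (((hasDerivAt_pow 5 y)).const_mul (2/15))).sub (tanh_hasDerivAt y)
      refine this.congr_deriv ?_; push_cast; ring)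
    (fun y hy => by
      rcases le_or_gt (y^2) 3 with h3 | h3
      · have h2 := tanh_ge_cubic hy
        have hpos : 0 ≤ y - y^3/3 := by nlinarith
        nlinarith [mul_le_mul h2 h2 hpos (tanh_nonneg hy), pow_nonneg hy 6]
      · nlinarith [sq_nonneg (Real.tanh y)])
  have := h (self_mem_Ici) hx hx
  simp [Real.tanh_zero] at this
  linarith

-- L4 : psi increment.  psi ξ = ξ tanh ξ - ξ² + ξ⁴/3;  (2/15)ξ⁶ - psi is monotone on [0,∞)
lemma psi_increment {x y : ℝ} (hx : 0 ≤ x) (hxy : x ≤ y) :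
    y * Real.tanh y - y^2 + y^4/3 ≤ x * Real.tanh x - x^2 + x^4/3 + (2/15)*(y^6 - x^6) := by
  have h := mono_aux (f := fun t => (2/15)*t^6 - (t * Real.tanh t - t^2 + t^4/3))
    (f' := fun t => (4/5)*t^5 - (Real.tanh t - t - t * Real.tanh t ^ 2 + (4/3)*t^3))
    (fun t => by
      have hd : HasDerivAt (fun t => t * Real.tanh t)
          (Real.tanh t + t * (1 - Real.tanh t ^ 2)) t := by
        have := (hasDerivAt_id t).mul (tanh_hasDerivAt t)
        refine this.congr_deriv ?_; simp only [id]; ring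
      have := (((hasDerivAt_pow 6 t).const_mul (2/15)).sub
        ((hd.sub ((hasDerivAt_pow 2 t))).add ((hasDerivAt_pow 4 t).div_const 3)))
      refine this.congr_deriv ?_; push_cast; ring)
    (fun t ht => by
      have h1 := tanh_le_self ht
      have h0 := tanh_nonneg ht
      rcases le_or_gt (t^2) 3 with h3 | h3
      · have h2 := tanh_ge_cubic ht
        have h5 := tanh_le_quintic ht
        have hpos : 0 ≤ t - t^3/3 := by nlinarith
        have hsq : (t - t^3/3)*(t - t^3/3) ≤ Real.tanh t * Real.tanh t :=
          mul_le_mul h2 h2 hpos h0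
        nlinarith [mul_le_mul_of_nonneg_left hsq ht, pow_nonneg ht 7]
      · nlinarith [mul_nonneg ht (mul_nonneg h0 h0), pow_nonneg ht 3, pow_nonneg ht 5])
  have := h (mem_Ici.2 hx) (mem_Ici.2 (hx.trans hxy)) hxy
  dsimp only at this
  linarith

lemma tanh_monotone : MonotoneOn Real.tanh (Ici (0:ℝ)) :=
  mono_aux (f' := fun t => 1 - Real.tanh t ^ 2) tanh_hasDerivAt
    (fun t ht => by nlinarith [tanh_le_one t, tanh_nonneg ht])

lemma tanh_one_ge : (3/4 : ℝ) ≤ Real.tanh 1 := by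
  rw [Real.tanh_eq_sinh_div_cosh, Real.sinh_eq, Real.cosh_eq]
  have h1 : (2.7182818283 : ℝ) < Real.exp 1 := Real.exp_one_gt_d9
  have h3 : (0:ℝ) < Real.exp 1 := Real.exp_pos 1
  have h2 : Real.exp (-1) = (Real.exp 1)⁻¹ := by rw [Real.exp_neg]
  have h6 : Real.exp 1 * (Real.exp 1)⁻¹ = 1 := mul_inv_cancel₀ (ne_of_gt h3)
  have h7 : (0:ℝ) < (Real.exp 1)⁻¹ := inv_pos.2 h3
  have hd : (0:ℝ) < (Real.exp 1 + Real.exp (-1))/2 := by positivity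
  rw [le_div_iff₀ hd, h2]
  nlinarith [mul_pos h7 h7]

noncomputable def F (x : ℝ) : ℝ := Real.sqrt (x * Real.tanh x)

lemma tanh_pos {x : ℝ} (hx : 0 < x) : 0 < Real.tanh x := by
  rw [Real.tanh_eq_sinh_div_cosh]
  exact div_pos (by rwa [Real.sinh_pos_iff]) (Real.cosh_pos x)

lemma xmul_hasDerivAt (x : ℝ) : HasDerivAt (fun y => y * Real.tanh y)
    (Real.tanh x + x * (1 - Real.tanh x ^ 2)) x := by
  have := (hasDerivAt_id x).mul (tanh_hasDerivAt x)
  refine this.congr_deriv ?_; simp only [id]; ring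

lemma F_concave : ConcaveOn ℝ (Ici (0:ℝ)) F := by
  have hint : interior (Ici (0:ℝ)) = Ioi 0 := interior_Ici
  apply concaveOn_of_hasDerivWithinAt2_nonpos (convex_Ici 0)
    (f' := fun x => (Real.tanh x + x * (1 - Real.tanh x ^ 2)) / (2 * Real.sqrt (x * Real.tanh x)))
    (f'' := fun x => ((2*(1 - Real.tanh x^2)*(1 - x * Real.tanh x)) * (2 * Real.sqrt (x * Real.tanh x))
      - (Real.tanh x + x*(1 - Real.tanh x^2)) * ((Real.tanh x + x*(1 - Real.tanh x^2)) / Real.sqrt (x * Real.tanh x)))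
      / (2 * Real.sqrt (x * Real.tanh x))^2)
  · -- continuity
    apply Continuous.continuousOn
    apply Real.continuous_sqrt.comp
    exact continuous_id.mul (continuous_iff_continuousAt.2
      (fun x => (tanh_hasDerivAt x).differentiableAt.continuousAt))
  · -- first derivative
    intro x hx
    rw [hint] at hx ⊢
    have hx0 : (0:ℝ) < x := hx
    have hg : 0 < x * Real.tanh x := mul_pos hx0 (tanh_pos hx0)
    have hs : HasDerivAt Real.sqrt (1 / (2 * Real.sqrt (x * Real.tanh x))) (x * Real.tanh x) :=
      Real.hasDerivAt_sqrt (ne_of_gt hg)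
    have := hs.comp x (xmul_hasDerivAt x)
    have h2 : HasDerivAt F ((Real.tanh x + x * (1 - Real.tanh x ^ 2)) / (2 * Real.sqrt (x * Real.tanh x))) x := by
      refine this.congr_deriv ?_
      field_simp
    exact h2.hasDerivWithinAt
  · -- second derivative
    intro x hx
    rw [hint] at hx ⊢
    have hx0 : (0:ℝ) < x := hx
    have hg : 0 < x * Real.tanh x := mul_pos hx0 (tanh_pos hx0)
    have hs : 0 < Real.sqrt (x * Real.tanh x) := Real.sqrt_pos.2 hg
    have hnum : HasDerivAt (fun y => Real.tanh y + y * (1 - Real.tanh y ^ 2))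
        (2*(1 - Real.tanh x^2)*(1 - x * Real.tanh x)) x := by
      have hT := tanh_hasDerivAt x
      have hsq : HasDerivAt (fun y => Real.tanh y ^ 2) (2 * Real.tanh x * (1 - Real.tanh x ^2)) x := by
        have := (hT.pow 2)
        refine this.congr_deriv ?_; ring
      have := hT.add (((hasDerivAt_id x).mul ((hasDerivAt_const x 1).sub hsq)))
      refine this.congr_deriv ?_
      simp only [id, Pi.sub_apply]; ring
    have hden : HasDerivAt (fun y => 2 * Real.sqrt (y * Real.tanh y))
        ((Real.tanh x + x * (1 - Real.tanh x ^ 2)) / Real.sqrt (x * Real.tanh x)) x := by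
      have hsqrt : HasDerivAt Real.sqrt (1 / (2 * Real.sqrt (x * Real.tanh x))) (x * Real.tanh x) :=
        Real.hasDerivAt_sqrt (ne_of_gt hg)
      have := (hsqrt.comp x (xmul_hasDerivAt x)).const_mul 2
      refine this.congr_deriv ?_
      field_simp
    have hdiv := hnum.div hden (by positivity)
    exact hdiv.hasDerivWithinAt
  · -- nonpositivity
    intro x hx
    rw [hint] at hx
    have hx0 : (0:ℝ) < x := hx
    have hT0 : 0 < Real.tanh x := tanh_pos hx0
    have hT1 : Real.tanh x ≤ 1 := tanh_le_one x
    have hg : 0 < x * Real.tanh x := mul_pos hx0 hT0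
    have hs : 0 < Real.sqrt (x * Real.tanh x) := Real.sqrt_pos.2 hg
    have hs2 : Real.sqrt (x * Real.tanh x) ^ 2 = x * Real.tanh x := Real.sq_sqrt hg.le
    apply div_nonpos_of_nonpos_of_nonneg _ (by positivity)
    have hT2 : Real.tanh x ^ 2 ≤ 1 := by nlinarith
    set T := Real.tanh x
    set s := Real.sqrt (x * T)
    have h1mT2 : 0 ≤ 1 - T^2 := by linarith
    have hkey : ((2*(1 - T^2)*(1 - x * T)) * (2 * s) - (T + x*(1 - T^2)) * ((T + x*(1 - T^2)) / s)) * s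
        = 4*(1-T^2)*(1-x*T)*(s^2) - (T + x*(1-T^2))^2 := by
      field_simp
      ring
    rw [hs2] at hkey
    have hineq : 4*(1-T^2)*(1-x*T)*(x*T) - (T + x*(1-T^2))^2 ≤ 0 := by
      nlinarith [sq_nonneg (T - x*(1-T^2)),
        mul_nonneg (mul_nonneg (sq_nonneg x) (sq_nonneg T)) h1mT2]
    by_contra hcon
    push_neg at hcon
    nlinarith [mul_pos hcon hs]



lemma inc {x' x y' : ℝ} (h0 : 0 ≤ x') (h1 : x' ≤ x) (h2 : x ≤ y') :
    F x' + F y' ≤ F x + F (x' + y' - x) := by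
  rcases eq_or_lt_of_le (h1.trans h2) with he | hlt
  · have hx : x = x' := le_antisymm (he ▸ h2) h1
    rw [hx]
    have : x' + y' - x' = y' := by ring
    rw [this]
  · set d := y' - x' with hd
    have hdpos : 0 < d := by simp [hd]; linarith
    set t := (y' - x) / d with ht
    have ht0 : 0 ≤ t := div_nonneg (by linarith) hdpos.le
    have ht1 : 0 ≤ 1 - t := by
      have : t ≤ 1 := by rw [ht, div_le_one hdpos]; simp [hd]; linarith
      linarith
    have hmem' : x' ∈ Ici (0:ℝ) := h0
    have hmem'' : y' ∈ Ici (0:ℝ) := le_trans h0 (h1.trans h2)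
    have hA := F_concave.2 hmem' hmem'' ht0 ht1 (by ring)
    have hB := F_concave.2 hmem' hmem'' ht1 ht0 (by ring)
    have e1 : t • x' + (1 - t) • y' = x := by
      simp only [smul_eq_mul, ht]
      field_simp
      ring
    have e2 : (1 - t) • x' + t • y' = x' + y' - x := by
      simp only [smul_eq_mul, ht]
      field_simp
      ring
    rw [e1] at hA
    rw [e2] at hB
    simp only [smul_eq_mul] at hA hB
    linarith



lemma F_nonneg (x : ℝ) : 0 ≤ F x := Real.sqrt_nonneg _

lemma F_le_self {x : ℝ} (hx : 0 ≤ x) : F x ≤ x := by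
  have h1 : x * Real.tanh x ≤ x * x :=
    mul_le_mul_of_nonneg_left (tanh_le_self hx) hx
  calc F x ≤ Real.sqrt (x * x) := Real.sqrt_le_sqrt h1
  _ = x := Real.sqrt_mul_self hx

lemma F_sq {x : ℝ} (hx : 0 ≤ x) : F x ^ 2 = x * Real.tanh x :=
  Real.sq_sqrt (mul_nonneg hx (tanh_nonneg hx))

lemma poly1 {a b : ℝ} (ha : 0 ≤ a) (hab : a ≤ b) (hb : b ≤ 1/8) :
    a*b^3/4 ≤ (a^2 - a^4/3) + 2*(a*b*(1 - a^2/3 - b^2/3)) + b^2 - b^4/3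
      - (42/5)*(a*b^5) - (a+b)^2 + (a+b)^4/3 := by
  have hb' : (0:ℝ) ≤ b := ha.trans hab
  have hb2 : b^2 ≤ 1/64 := by nlinarith
  have hab3 : (0:ℝ) ≤ a*b^3 := by positivity
  have h1 : a*b^5 ≤ (a*b^3)*(1/64) := by nlinarith [mul_le_mul_of_nonneg_left hb2 hab3]
  nlinarith [h1, mul_nonneg (mul_nonneg (mul_nonneg ha ha) ha) hb',
    mul_nonneg (mul_nonneg (mul_nonneg ha ha) hb') hb']

/-- Main quantitative estimate in the small regime. -/
lemma key {a b : ℝ} (ha : 0 ≤ a) (hab : a ≤ b) (hb : b ≤ 1/8) :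
    a * b^2 / 16 ≤ F a + F b - F (a + b) := by
  rcases eq_or_lt_of_le (ha.trans hab) with hb0 | hbpos
  · have hb0 : b = 0 := hb0.symm
    have ha0 : a = 0 := le_antisymm (hb0 ▸ hab) ha
    simp [F, ha0, hb0, Real.tanh_zero]
  · have hTa := tanh_nonneg ha
    have hb' : (0:ℝ) ≤ b := ha.trans hab
    have hTb := tanh_nonneg hb'
    have hab0 : (0:ℝ) ≤ a + b := by linarith
    have hTab := tanh_nonneg hab0
    set A := F a with hA
    set B := F b with hB
    set C := F (a + b) with hC
    have hA2 : A^2 = a * Real.tanh a := F_sq ha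
    have hB2 : B^2 = b * Real.tanh b := F_sq hb'
    have hC2 : C^2 = (a+b) * Real.tanh (a+b) := F_sq hab0
    have hA0 : 0 ≤ A := F_nonneg a
    have hB0 : 0 ≤ B := F_nonneg b
    have hC0 : 0 ≤ C := F_nonneg (a+b)
    have hAa : A ≤ a := F_le_self ha
    have hBb : B ≤ b := F_le_self hb'
    have hCab : C ≤ a + b := F_le_self hab0
    have hu : a^2 ≤ 1/64 := by nlinarith
    have hv : b^2 ≤ 1/64 := by nlinarith
    have h2a := tanh_ge_cubic ha
    have h2b := tanh_ge_cubic hb'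
    -- lower bound for A*B
    have hABlow : a*b*(1 - a^2/3 - b^2/3) ≤ A * B := by
      have hprod : A * B = Real.sqrt ((a * Real.tanh a) * (b * Real.tanh b)) := by
        rw [hA, hB, F, F, ← Real.sqrt_mul (mul_nonneg ha hTa)]
      rw [hprod]
      apply Real.le_sqrt_of_sq_le
      have q1 : a^2*(1 - a^2/3) ≤ a * Real.tanh a := by nlinarith
      have q2 : b^2*(1 - b^2/3) ≤ b * Real.tanh b := by nlinarith
      have q1n : (0:ℝ) ≤ a^2*(1 - a^2/3) := by nlinarith
      have qq : (a^2*(1-a^2/3)) * (b^2*(1-b^2/3)) ≤ (a*Real.tanh a) * (b*Real.tanh b) :=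
        mul_le_mul q1 q2 (by nlinarith) (by positivity)
      have hpol : (0:ℝ) ≤ a^2/3 + b^2/3 - a^4/9 - b^4/9 - a^2*b^2/9 := by nlinarith
      have hq : (a*b*(1 - a^2/3 - b^2/3))^2 ≤ (a^2*(1-a^2/3)) * (b^2*(1-b^2/3)) := by
        nlinarith [mul_nonneg (mul_nonneg (sq_nonneg a) (sq_nonneg b)) hpol]
      linarith [hq.trans qq]
    -- Delta bound
    have hab2 : a + b ≤ 2*b := by linarith
    have hD : (a+b)^6 - b^6 ≤ 63*a*b^5 := by
      have e : (a+b)^6 - b^6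
          = a*((a+b)^5 + (a+b)^4*b + (a+b)^3*b^2 + (a+b)^2*b^3 + (a+b)*b^4 + b^5) := by ring
      have p5 : (a+b)^5 ≤ 32*b^5 := by nlinarith [pow_le_pow_left₀ hab0 hab2 5]
      have p4 : (a+b)^4 ≤ 16*b^4 := by nlinarith [pow_le_pow_left₀ hab0 hab2 4]
      have p3 : (a+b)^3 ≤ 8*b^3 := by nlinarith [pow_le_pow_left₀ hab0 hab2 3]
      have p2 : (a+b)^2 ≤ 4*b^2 := by nlinarith [pow_le_pow_left₀ hab0 hab2 2]
      have hbp : (0:ℝ) ≤ b^5 := by positivity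
      rw [e]
      have hsumb : (a+b)^5 + (a+b)^4*b + (a+b)^3*b^2 + (a+b)^2*b^3 + (a+b)*b^4 + b^5 ≤ 63*b^5 := by
        nlinarith [mul_le_mul_of_nonneg_right p4 hb', mul_le_mul_of_nonneg_right p3 (by positivity : (0:ℝ) ≤ b^2),
          mul_le_mul_of_nonneg_right p2 (by positivity : (0:ℝ) ≤ b^3),
          mul_le_mul_of_nonneg_right hab2 (by positivity : (0:ℝ) ≤ b^4)]
      calc a*((a+b)^5 + (a+b)^4*b + (a+b)^3*b^2 + (a+b)^2*b^3 + (a+b)*b^4 + b^5)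
          ≤ a*(63*b^5) := mul_le_mul_of_nonneg_left hsumb ha
        _ = 63*a*b^5 := by ring
    -- psi increment
    have hpsi := psi_increment hb' (by linarith : b ≤ a + b)
    -- S lower bound
    have hS : a*b^3/4 ≤ A^2 + B^2 + 2*(A*B) - C^2 := by
      rw [hA2, hB2, hC2]
      have haTa : a^2 - a^4/3 ≤ a * Real.tanh a := by nlinarith [h2a, ha]
      have hp := poly1 ha hab hb
      linarith only [hp, haTa, hABlow, hpsi, hD]
    -- subadditivity
    have hsub : C ≤ A + B := by
      have hab3 : (0:ℝ) ≤ a*b^3 := by positivity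
      have h1 : C^2 ≤ (A+B)^2 := by
        have e : (A+B)^2 - C^2 = A^2 + B^2 + 2*(A*B) - C^2 := by ring
        linarith
      nlinarith [h1, hC0, hA0, hB0]
    have hsum : A + B + C ≤ 4*b := by linarith
    have hfin : (A + B - C) * (A + B + C) = A^2 + B^2 + 2*(A*B) - C^2 := by ring
    have h4 : a*b^3/4 ≤ (A+B-C)*(4*b) := by
      have step1 : a*b^3/4 ≤ (A+B-C)*(A+B+C) := by rw [hfin]; linarith
      have step2 : (A+B-C)*(A+B+C) ≤ (A+B-C)*(4*b) :=
        mul_le_mul_of_nonneg_left hsum (by linarith)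
      linarith
    have h5 := (div_le_iff₀ (by linarith : (0:ℝ) < 4*b)).2 h4
    have e : a*b^3/4/(4*b) = a*b^2/16 := by
      field_simp
      ring
    linarith [e ▸ h5]




lemma lam_eq_F {x : ℝ} (hx : 0 ≤ x) : Lam x = F x := by
  rcases eq_or_lt_of_le hx with h0 | h0
  · simp [Lam, F, ← h0]
  · unfold Lam F
    rw [show x * Real.tanh x = x^2 * (Real.tanh x / x) by field_simp,
      Real.sqrt_mul (sq_nonneg x), Real.sqrt_sq hx]

lemma big_case {a : ℝ} (ha : 1 ≤ a) : Real.sqrt a / 4 ≤ F a + F a - F (2*a) := by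
  have ha0 : (0:ℝ) ≤ a := by linarith
  have hTa : (3/4:ℝ) ≤ Real.tanh a := le_trans tanh_one_ge
    (tanh_monotone (mem_Ici.2 zero_le_one) (mem_Ici.2 ha0) ha)
  have h1 : Real.sqrt ((3/4) * a) ≤ F a := by
    apply Real.sqrt_le_sqrt
    nlinarith
  have h2 : F (2*a) ≤ Real.sqrt (2*a) := by
    apply Real.sqrt_le_sqrt
    nlinarith [tanh_le_one (2*a)]
  have e1 : Real.sqrt ((3/4) * a) = Real.sqrt (3/4) * Real.sqrt a := Real.sqrt_mul (by norm_num) a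
  have e2 : Real.sqrt (2*a) = Real.sqrt 2 * Real.sqrt a := Real.sqrt_mul (by norm_num) a
  have hs2 : Real.sqrt 2 ^ 2 = 2 := Real.sq_sqrt (by norm_num)
  have hs34 : Real.sqrt (3/4) ^ 2 = 3/4 := Real.sq_sqrt (by norm_num)
  have hs2' : Real.sqrt 2 ≤ 1.5 := by
    nlinarith [hs2, Real.sqrt_nonneg 2]
  have hnum : Real.sqrt 2 + 1/4 ≤ 2 * Real.sqrt (3/4) := by
    nlinarith [hs2, hs34, hs2', Real.sqrt_nonneg 2, Real.sqrt_nonneg (3/4:ℝ),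
      sq_nonneg (Real.sqrt 2 + 1/4 - 2*Real.sqrt (3/4))]
  have hprod : 0 ≤ (2*Real.sqrt (3/4) - Real.sqrt 2 - 1/4) * Real.sqrt a :=
    mul_nonneg (by linarith) (Real.sqrt_nonneg a)
  nlinarith [h1, h2, e1, e2, hprod]

lemma min_one_sq_le_one {b : ℝ} (hb : 0 ≤ b) : (min b 1)^2 ≤ 1 := by
  have h1 : min b 1 ≤ 1 := min_le_right b 1
  have h0 : 0 ≤ min b 1 := le_min hb zero_le_one
  nlinarith

/-- Lower bound of the subadditivity defect (resonance function lower bound):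
for `0 ≤ a ≤ b`, `Λ a + Λ b - Λ (a+b) ≳ a^{1/2} (a ∧ 1)^{1/2} (b ∧ 1)²`. -/
theorem resonance_lower_bound :
    ∃ c > (0 : ℝ), ∀ a b : ℝ, 0 ≤ a → a ≤ b →
      c * Real.sqrt a * Real.sqrt (min a 1) * (min b 1) ^ 2 ≤
        Lam a + Lam b - Lam (a + b) := by
  refine ⟨1/8192, by norm_num, ?_⟩
  intro a b ha hab
  have hb' : (0:ℝ) ≤ b := ha.trans hab
  have hab0 : (0:ℝ) ≤ a + b := by linarith
  rw [lam_eq_F ha, lam_eq_F hb', lam_eq_F hab0]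
  have hmb0 : 0 ≤ (min b 1)^2 := sq_nonneg _
  have hmb1 : (min b 1)^2 ≤ 1 := min_one_sq_le_one hb'
  rcases le_or_gt a 1 with ha1 | ha1
  · -- a ≤ 1
    have hmina : min a 1 = a := min_eq_left ha1
    rw [hmina]
    have hsq : Real.sqrt a * Real.sqrt a = a := Real.mul_self_sqrt ha
    rcases le_or_gt b (1/8) with hb8 | hb8
    · -- b ≤ 1/8
      have hminb : min b 1 = b := min_eq_left (by linarith)
      rw [hminb]
      have hk := key ha hab hb8
      have : 1/8192 * Real.sqrt a * Real.sqrt a * b^2 = a * b^2 / 8192 := by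
        rw [show (1:ℝ)/8192 * Real.sqrt a * Real.sqrt a * b^2
          = Real.sqrt a * Real.sqrt a * (b^2/8192) by ring, hsq]; ring
      rw [this]
      have hab2 : 0 ≤ a * b^2 := by positivity
      linarith
    · -- b > 1/8
      have h8 : (0:ℝ) ≤ 1/8 := by norm_num
      rcases le_or_gt a (1/8) with ha8 | ha8
      · -- a ≤ 1/8 ≤ b
        have hinc := inc (x' := 1/8) (x := b) (y' := a + b) h8 hb8.le (by linarith)
        have e : (1:ℝ)/8 + (a+b) - b = a + 1/8 := by ring
        rw [e] at hinc
        have hk := key ha ha8 (le_refl _)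
        have e2 : a * (1/8:ℝ)^2 / 16 = a / 1024 := by ring
        rw [e2] at hk
        have hL : 1/8192 * Real.sqrt a * Real.sqrt a * (min b 1)^2 ≤ a / 8192 := by
          rw [show (1:ℝ)/8192 * Real.sqrt a * Real.sqrt a * (min b 1)^2
            = Real.sqrt a * Real.sqrt a * ((min b 1)^2/8192) by ring, hsq]
          nlinarith
        linarith
      · -- 1/8 < a ≤ 1
        have hinc1 := inc (x' := 1/8) (x := a) (y' := a + b) h8 ha8.le (by linarith)
        have e1 : (1:ℝ)/8 + (a+b) - a = 1/8 + b := by ring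
        rw [e1] at hinc1
        have hinc2 := inc (x' := 1/8) (x := b) (y' := 1/8 + b) h8 (by linarith) (by linarith)
        have e2 : (1:ℝ)/8 + (1/8 + b) - b = 1/8 + 1/8 := by ring
        rw [e2] at hinc2
        have hk := key (a := 1/8) (b := 1/8) h8 (le_refl _) (le_refl _)
        have e3 : (1:ℝ)/8 * (1/8:ℝ)^2 / 16 = 1/8192 := by norm_num
        rw [e3] at hk
        have e4 : (1:ℝ)/8 + 1/8 = 1/4 := by norm_num
        have hL : 1/8192 * Real.sqrt a * Real.sqrt a * (min b 1)^2 ≤ 1/8192 := by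
          rw [show (1:ℝ)/8192 * Real.sqrt a * Real.sqrt a * (min b 1)^2
            = Real.sqrt a * Real.sqrt a * ((min b 1)^2/8192) by ring, hsq]
          nlinarith
        linarith [hinc2, hinc1, hk]
  · -- a > 1
    have hmina : min a 1 = 1 := min_eq_right ha1.le
    rw [hmina, Real.sqrt_one]
    have hinc := inc (x' := a) (x := b) (y' := a + b) ha hab (by linarith)
    have e : a + (a+b) - b = 2*a := by ring
    rw [e] at hinc
    have hbig := big_case ha1.le
    have hL : 1/8192 * Real.sqrt a * 1 * (min b 1)^2 ≤ Real.sqrt a / 4 := by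
      nlinarith [Real.sqrt_nonneg a]
    linarith
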